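/- For every integer n ≥ 4, the broadcast independence number of the oriented circulant graph C⃗(n;1,2) equals ⌊n/2⌋, which is its diameter; moreover every independent broadcast of maximum cost has exactly one broadcast vertex. -/
import Mathlib


/-- Arc relation of the oriented circulant graph C⃗(n;1,a): arcs u → u+1 and u → u+a (mod n). -/
def circArc (n : ℕ) (a : ℤ) (u v : ZMod n) : Prop :=
  v = u + 1 ∨ v = u + (a : ZMod n)

/-- There is a directed walk of length k from u to v in C⃗(n;1,a). -/
def circSteps (n : ℕ) (a : ℤ) (u v : ZMod n) (k : ℕ) : Prop :=
  ∃ g : ℕ → ZMod n, g 0 = u ∧ g k = v ∧ ∀ i < k, circArc n a (g i) (g (i + 1))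

/-- Directed distance: length of a shortest directed path from u to v. -/
noncomputable def circDist (n : ℕ) (a : ℤ) (u v : ZMod n) : ℕ :=
  sInf {k | circSteps n a u v k}

/-- Eccentricity of a vertex: maximum distance from it to any vertex. -/
noncomputable def circEcc (n : ℕ) (a : ℤ) (u : ZMod n) : ℕ :=
  sSup {d | ∃ v, d = circDist n a u v}

/-- Diameter: maximum eccentricity. -/
noncomputable def circDiam (n : ℕ) (a : ℤ) : ℕ :=
  sSup {d | ∃ u, d = circEcc n a u}

/-- f is an independent broadcast on C⃗(n;1,a). -/
def IsIndepBroadcast (n : ℕ) (a : ℤ) (f : ZMod n → ℕ) : Prop :=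
  (∀ v, f v ≤ circEcc n a v) ∧
  ∀ u v : ZMod n, u ≠ v → 0 < f u → 0 < f v → f u < circDist n a u v

/-- Cost of a broadcast: sum of its values over all vertices. -/
def circCost (n : ℕ) (f : ZMod n → ℕ) : ℕ :=
  ∑ i ∈ Finset.range n, f (i : ZMod n)

/-- The broadcast independence number of C⃗(n;1,a). -/
noncomputable def betaB (n : ℕ) (a : ℤ) : ℕ :=
  sSup {c | ∃ f : ZMod n → ℕ, IsIndepBroadcast n a f ∧ c = circCost n f}

lemma circSteps_iff (n : ℕ) (u v : ZMod n) (k : ℕ) :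
    circSteps n 2 u v k ↔ ∃ j ≤ k, v = u + ((k + j : ℕ) : ZMod n) := by
  induction k generalizing v with
  | zero =>
    constructor
    · rintro ⟨g, h0, hk, _⟩
      exact ⟨0, le_refl 0, by simp [← h0, ← hk]⟩
    · rintro ⟨j, hj, hv⟩
      interval_cases j
      exact ⟨fun _ => u, rfl, by simpa using hv.symm, by omega⟩
  | succ k ih =>
    constructor
    · rintro ⟨g, h0, hk, harc⟩
      have hstep : circArc n 2 (g k) v := by rw [← hk]; exact harc k (by omega)
      obtain ⟨j, hj, hgk⟩ := (ih (g k)).1 ⟨g, h0, rfl, fun i hi => harc i (by omega)⟩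
      rcases hstep with h | h
      · refine ⟨j, by omega, ?_⟩
        rw [h, hgk]; push_cast; ring
      · refine ⟨j + 1, by omega, ?_⟩
        rw [h, hgk]; push_cast; ring
    · rintro ⟨j, hj, hv⟩
      by_cases hjk : j ≤ k
      · obtain ⟨g, h0, hk, harc⟩ := (ih (u + ((k + j : ℕ) : ZMod n))).2 ⟨j, hjk, rfl⟩
        refine ⟨fun i => if i = k + 1 then v else g i, by simp [h0], by simp, ?_⟩
        intro i hi
        by_cases hik : i < k
        · simp only [if_neg (by omega : i ≠ k + 1), if_neg (by omega : i + 1 ≠ k + 1)]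
          exact harc i hik
        · obtain rfl : i = k := by omega
          simp only [if_neg (Nat.ne_of_lt (Nat.lt_succ_self _)), if_pos rfl]
          left
          rw [hk, hv]; push_cast; ring
      · have hjk' : j = k + 1 := by omega
        subst hjk'
        obtain ⟨g, h0, hk, harc⟩ := (ih (u + ((k + k : ℕ) : ZMod n))).2 ⟨k, le_refl k, rfl⟩
        refine ⟨fun i => if i = k + 1 then v else g i, by simp [h0], by simp, ?_⟩
        intro i hi
        by_cases hik : i < k
        · simp only [if_neg (by omega : i ≠ k + 1), if_neg (by omega : i + 1 ≠ k + 1)]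
          exact harc i hik
        · obtain rfl : i = k := by omega
          simp only [if_neg (Nat.ne_of_lt (Nat.lt_succ_self _)), if_pos rfl]
          right
          rw [hk, hv]; push_cast; ring

lemma circDist_eq (n : ℕ) [NeZero n] (u v : ZMod n) :
    circDist n 2 u v = ((v - u).val + 1) / 2 := by
  have hn := Nat.pos_of_ne_zero (NeZero.ne n)
  have hmlt : (v - u).val < n := ZMod.val_lt _
  set m := (v - u).val with hm
  have hmem : circSteps n 2 u v ((m + 1) / 2) := by
    rw [circSteps_iff]
    refine ⟨m / 2, by omega, ?_⟩
    have h1 : ((m + 1) / 2 + m / 2) = m := by omega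
    rw [h1]
    have h2 : ((m : ℕ) : ZMod n) = v - u := by
      rw [hm]; simp [ZMod.natCast_val, ZMod.cast_id]
    rw [h2]; ring
  refine le_antisymm (Nat.sInf_le hmem) (le_csInf ⟨_, hmem⟩ ?_)
  rintro k hk
  rw [Set.mem_setOf_eq, circSteps_iff] at hk
  obtain ⟨j, hj, hv⟩ := hk
  have h3 : v - u = ((k + j : ℕ) : ZMod n) := by rw [hv]; ring
  have hval : m = (k + j) % n := by rw [hm, h3, ZMod.val_natCast]
  have := Nat.mod_le (k + j) n
  omega

lemma circEcc_eq (n : ℕ) [NeZero n] (u : ZMod n) : circEcc n 2 u = n / 2 := by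
  have hn := Nat.pos_of_ne_zero (NeZero.ne n)
  apply le_antisymm
  · refine csSup_le ⟨circDist n 2 u u, u, rfl⟩ ?_
    rintro d ⟨v, rfl⟩
    rw [circDist_eq]
    have := ZMod.val_lt (v - u)
    omega
  · apply le_csSup
    · refine ⟨n / 2, ?_⟩
      rintro d ⟨v, rfl⟩
      rw [circDist_eq]
      have := ZMod.val_lt (v - u)
      omega
    · refine ⟨u + ((n - 1 : ℕ) : ZMod n), ?_⟩
      rw [circDist_eq]
      have h1 : (u + ((n - 1 : ℕ) : ZMod n) - u) = ((n - 1 : ℕ) : ZMod n) := by ring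
      rw [h1, ZMod.val_cast_of_lt (by omega)]
      omega

lemma circDiam_eq (n : ℕ) [NeZero n] : circDiam n 2 = n / 2 := by
  have h : {d | ∃ u : ZMod n, d = circEcc n 2 u} = {n / 2} := by
    ext d
    simp only [Set.mem_setOf_eq, Set.mem_singleton_iff, circEcc_eq]
    exact ⟨fun ⟨_, h⟩ => h, fun h => ⟨0, h⟩⟩
  rw [circDiam, h, csSup_singleton]

lemma circCost_eq_sum (n : ℕ) [NeZero n] (f : ZMod n → ℕ) :
    circCost n f = ∑ v : ZMod n, f v := by
  have hinj : Set.InjOn (Nat.cast : ℕ → ZMod n) (Finset.range n) := by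
    intro i hi j hj hij
    simp only [Finset.coe_range, Set.mem_Iio] at hi hj
    rw [← ZMod.val_cast_of_lt hi, ← ZMod.val_cast_of_lt hj, hij]
  have himg : Finset.image (Nat.cast : ℕ → ZMod n) (Finset.range n) = Finset.univ := by
    apply Finset.eq_univ_of_card
    rw [Finset.card_image_of_injOn hinj, Finset.card_range, ZMod.card]
  rw [circCost, ← Finset.sum_image (fun i hi j hj h => hinj hi hj h), himg]

lemma sep (n : ℕ) [NeZero n] (f : ZMod n → ℕ) (hf : IsIndepBroadcast n 2 f)
    {u v : ZMod n} (huv : u ≠ v) (hu : 0 < f u) (hv : 0 < f v) :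
    2 * f u + 1 ≤ (v - u).val := by
  have := hf.2 u v huv hu hv
  rw [circDist_eq] at this
  omega

lemma interval_bound (n : ℕ) [NeZero n] (f : ZMod n → ℕ) (hf : IsIndepBroadcast n 2 f)
    (S : Finset (ZMod n)) (hS : S = Finset.univ.filter (fun v => 0 < f v))
    (hcard : 2 ≤ S.card) :
    2 * (∑ v ∈ S, f v) + S.card ≤ n := by
  have hn := Nat.pos_of_ne_zero (NeZero.ne n)
  have hmemS : ∀ v ∈ S, 0 < f v := by
    intro v hvS; rw [hS] at hvS; exact (Finset.mem_filter.1 hvS).2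
  have hfell : ∀ v ∈ S, ∃ w ∈ S, w ≠ v := by
    intro v hvS
    exact Finset.exists_mem_ne hcard v
  have hsize : ∀ v ∈ S, 2 * f v + 1 < n := by
    intro v hvS
    obtain ⟨w, hwS, hwv⟩ := hfell v hvS
    have h1 := sep n f hf (Ne.symm hwv) (hmemS v hvS) (hmemS w hwS)
    have := ZMod.val_lt (w - v)
    omega
  set T : ZMod n → Finset (ZMod n) :=
    fun v => (Finset.range (2 * f v + 1)).image (fun t : ℕ => v + (t : ZMod n)) with hT
  have hTcard : ∀ v ∈ S, (T v).card = 2 * f v + 1 := by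
    intro v hvS
    rw [hT]
    rw [Finset.card_image_of_injOn, Finset.card_range]
    intro s hs t ht hst
    simp only [Finset.coe_range, Set.mem_Iio] at hs ht
    have hs' : s < n := by have := hsize v hvS; omega
    have ht' : t < n := by have := hsize v hvS; omega
    have : (s : ZMod n) = (t : ZMod n) := add_left_cancel hst
    rw [← ZMod.val_cast_of_lt hs', ← ZMod.val_cast_of_lt ht', this]
  have hdisj : (S : Set (ZMod n)).PairwiseDisjoint T := by
    intro u huS v hvS huv
    rw [Function.onFun, Finset.disjoint_left]
    intro x hxu hxv
    rw [hT] at hxu hxv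
    simp only [Finset.mem_image, Finset.mem_range] at hxu hxv
    obtain ⟨s, hs, hxs⟩ := hxu
    obtain ⟨t, ht, hxt⟩ := hxv
    have huS' : u ∈ S := huS
    have hvS' : v ∈ S := hvS
    have h1 := sep n f hf huv (hmemS u huS') (hmemS v hvS')
    have h2 := sep n f hf (Ne.symm huv) (hmemS v hvS') (hmemS u huS')
    have heq : u + (s : ZMod n) = v + (t : ZMod n) := by rw [hxs, hxt]
    have hvltn := ZMod.val_lt (v - u)
    have hultn := ZMod.val_lt (u - v)
    rcases le_or_gt t s with hts | hts
    · have h3 : v - u = ((s - t : ℕ) : ZMod n) := by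
        have : ((s - t : ℕ) : ZMod n) = (s : ZMod n) - (t : ZMod n) := by
          push_cast [hts]; ring
        rw [this]; linear_combination -heq
      have h4 : (v - u).val = (s - t) % n := by rw [h3, ZMod.val_natCast]
      have h5 : (s - t) % n = s - t := Nat.mod_eq_of_lt (by omega)
      omega
    · have h3 : u - v = ((t - s : ℕ) : ZMod n) := by
        have : ((t - s : ℕ) : ZMod n) = (t : ZMod n) - (s : ZMod n) := by
          push_cast [le_of_lt hts]; ring
        rw [this]; linear_combination heq
      have h4 : (u - v).val = (t - s) % n := by rw [h3, ZMod.val_natCast]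
      have h5 : (t - s) % n = t - s := Nat.mod_eq_of_lt (by omega)
      omega
  have hbiU : (S.biUnion T).card = ∑ v ∈ S, (T v).card :=
    Finset.card_biUnion (fun u hu v hv huv => hdisj hu hv huv)
  have hle : (S.biUnion T).card ≤ n := by
    have := Finset.card_le_card (Finset.subset_univ (S.biUnion T))
    rwa [Finset.card_univ, ZMod.card] at this
  rw [hbiU, Finset.sum_congr rfl hTcard] at hle
  rw [Finset.sum_add_distrib, Finset.sum_const, smul_eq_mul, mul_one,
    ← Finset.mul_sum] at hle
  omega

lemma cost_cases (n : ℕ) (hn4 : 4 ≤ n) (f : ZMod n → ℕ) (hf : IsIndepBroadcast n 2 f) :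
    circCost n f ≤ n / 2 ∧ (circCost n f = n / 2 → ∃! v, 0 < f v) := by
  haveI : NeZero n := ⟨by omega⟩
  set S : Finset (ZMod n) := Finset.univ.filter (fun v => 0 < f v) with hS
  have hsum : circCost n f = ∑ v ∈ S, f v := by
    rw [circCost_eq_sum]
    symm
    apply Finset.sum_subset (Finset.subset_univ S)
    intro x _ hx
    rw [hS, Finset.mem_filter] at hx
    push_neg at hx
    have := hx (Finset.mem_univ x)
    omega
  rcases Nat.lt_or_ge S.card 2 with hc | hc
  · rcases Nat.lt_or_ge S.card 1 with hc0 | hc1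
    · have hS0 : S = ∅ := Finset.card_eq_zero.1 (by omega)
      rw [hS0, Finset.sum_empty] at hsum
      constructor
      · omega
      · intro h; omega
    · have hc1' : S.card = 1 := by omega
      obtain ⟨v, hv⟩ := Finset.card_eq_one.1 hc1'
      rw [hv, Finset.sum_singleton] at hsum
      have hvS : v ∈ S := by rw [hv]; exact Finset.mem_singleton_self v
      have hvpos : 0 < f v := by
        rw [hS, Finset.mem_filter] at hvS; exact hvS.2
      constructor
      · rw [hsum]
        have := hf.1 v
        rwa [circEcc_eq] at this
      · intro _
        refine ⟨v, hvpos, ?_⟩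
        intro w hw
        have : w ∈ S := by rw [hS, Finset.mem_filter]; exact ⟨Finset.mem_univ w, hw⟩
        rw [hv, Finset.mem_singleton] at this
        exact this
  · have hb := interval_bound n f hf S hS hc
    constructor
    · omega
    · intro h; omega

theorem stmt5 (n : ℕ) (hn : 4 ≤ n) :
    betaB n 2 = n / 2 ∧ circDiam n 2 = n / 2 ∧
    ∀ f : ZMod n → ℕ, IsIndepBroadcast n 2 f → circCost n f = betaB n 2 →
      ∃! v : ZMod n, 0 < f v := by
  haveI : NeZero n := ⟨by omega⟩
  set f0 : ZMod n → ℕ := fun v => if v = 0 then n / 2 else 0 with hf0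
  have hf0ind : IsIndepBroadcast n 2 f0 := by
    constructor
    · intro v
      rw [circEcc_eq, hf0]
      simp only []
      split <;> omega
    · intro u v huv hu hv
      exfalso
      apply huv
      rw [hf0] at hu hv
      by_contra _
      rcases eq_or_ne u 0 with h1 | h1
      · rcases eq_or_ne v 0 with h2 | h2
        · exact huv (h1.trans h2.symm)
        · simp [h2] at hv
      · simp [h1] at hu
  have hf0cost : circCost n f0 = n / 2 := by
    rw [circCost_eq_sum, hf0]
    simp
  have hbeta : betaB n 2 = n / 2 := by
    apply le_antisymm
    · refine csSup_le ⟨n / 2, f0, hf0ind, hf0cost.symm⟩ ?_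
      rintro c ⟨f, hf, rfl⟩
      exact (cost_cases n hn f hf).1
    · apply le_csSup
      · refine ⟨n / 2, ?_⟩
        rintro c ⟨f, hf, rfl⟩
        exact (cost_cases n hn f hf).1
      · exact ⟨f0, hf0ind, hf0cost.symm⟩
  refine ⟨hbeta, circDiam_eq n, ?_⟩
  intro f hf hcost
  rw [hbeta] at hcost
  exact (cost_cases n hn f hf).2 hcost
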